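/- Let m, n ≥ 1, β ∈ ℝ, and let F₁, F₂ : ℝ^{m+1} → ℝ^{n+1} be maps whose components are homogeneous polynomials of degree 2, such that for i = 1, 2 and all x ∈ ℝ^{m+1}: |F_i(x)|² = |x|⁴, |DF_i(x)|² = (m+5)|x|², and |ΔF_i|² = 2(m+1)² (ΔF_i being a constant vector since F_i is quadratic). Define F : ℝ^{m+1} → ℝ^{2n+2} by F(x) = (cos β · F₁(x), sin β · F₂(x)). Then F also satisfies |F(x)|² = |x|⁴, |DF(x)|² = (m+5)|x|², and |ΔF|² = 2(m+1)² for all x. -/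

import Mathlib

/-!
STATEMENT 9: If F₁, F₂ : ℝ^{m+1} → ℝ^{n+1} are quadratic homogeneous polynomial
maps with |F_i(x)|² = |x|⁴, |DF_i(x)|² = (m+5)|x|², |ΔF_i|² = 2(m+1)², then
F = (cos β·F₁, sin β·F₂) : ℝ^{m+1} → ℝ^{2n+2} satisfies the same three identities.
-/

/-- Partial derivative of a map `ℝⁿ → ℝᵐ` in the `j`-th coordinate direction. -/
noncomputable def pd {n m : ℕ} (F : (Fin n → ℝ) → (Fin m → ℝ)) (j : Fin n)
    (x : Fin n → ℝ) : Fin m → ℝ :=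
  fderiv ℝ F x (Pi.single j 1)

/-- Componentwise Euclidean Laplacian of a map `ℝⁿ → ℝᵐ`. -/
noncomputable def lap {n m : ℕ} (F : (Fin n → ℝ) → (Fin m → ℝ)) (x : Fin n → ℝ) :
    Fin m → ℝ :=
  fun i => ∑ j, pd (pd F j) j x i

/-- Squared Frobenius norm of the total derivative of `F` at `x`. -/
noncomputable def frobSq {n m : ℕ} (F : (Fin n → ℝ) → (Fin m → ℝ)) (x : Fin n → ℝ) : ℝ :=
  ∑ i, ∑ j, (pd F j x i) ^ 2



lemma contDiff_eval {k : ℕ} (P : MvPolynomial (Fin k) ℝ) :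
    ContDiff ℝ ⊤ (fun x : Fin k → ℝ => MvPolynomial.eval x P) := by
  induction P using MvPolynomial.induction_on with
  | C a => simpa using contDiff_const
  | add p q hp hq => simpa using hp.add hq
  | mul_X p i hp => simpa using hp.mul (contDiff_pi.mp contDiff_id i)

lemma contDiff_of_poly {k a : ℕ} (G : (Fin k → ℝ) → Fin a → ℝ)
    (h : ∀ i, ∃ P : MvPolynomial (Fin k) ℝ, ∀ x, G x i = MvPolynomial.eval x P) :
    ContDiff ℝ ⊤ G := by
  rw [contDiff_pi]
  intro i
  obtain ⟨P, hP⟩ := h i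
  have := contDiff_eval P
  simpa [← hP] using this

lemma contDiff_pd {k a : ℕ} {G : (Fin k → ℝ) → Fin a → ℝ}
    (hG : ContDiff ℝ ⊤ G) (j : Fin k) : ContDiff ℝ ⊤ (pd G j) := by
  unfold pd
  exact (hG.fderiv_right le_top).clm_apply contDiff_const

lemma pd_apply {k a : ℕ} (f : (Fin k → ℝ) → Fin a → ℝ) {x : Fin k → ℝ}
    (h : ∀ i, DifferentiableAt ℝ (fun y => f y i) x) (j : Fin k) (i : Fin a) :
    pd f j x i = fderiv ℝ (fun y => f y i) x (Pi.single j 1) := by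
  rw [pd, fderiv_pi h]; rfl

lemma pd_append {k a : ℕ} (c s : ℝ) (G H : (Fin k → ℝ) → Fin a → ℝ)
    (hG : Differentiable ℝ G) (hH : Differentiable ℝ H) (j : Fin k) (x : Fin k → ℝ) :
    pd (fun y => Fin.append (fun i => c * G y i) (fun i => s * H y i)) j x
      = Fin.append (fun i => c * pd G j x i) (fun i => s * pd H j x i) := by
  have hGc : ∀ (i : Fin a), DifferentiableAt ℝ (fun y => G y i) x := fun i =>
    differentiableAt_pi.mp (hG x) i
  have hHc : ∀ (i : Fin a), DifferentiableAt ℝ (fun y => H y i) x := fun i =>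
    differentiableAt_pi.mp (hH x) i
  have hcomp : ∀ i : Fin (a + a),
      DifferentiableAt ℝ
        (fun y => Fin.append (fun i => c * G y i) (fun i => s * H y i) i) x := by
    intro i
    refine Fin.addCases (fun i₀ => ?_) (fun i₀ => ?_) i
    · simpa [Fin.append_left] using (hGc i₀).const_mul c
    · simpa only [Fin.append_right] using (hHc i₀).const_mul s
  funext i
  rw [pd_apply _ hcomp]
  refine Fin.addCases (fun i₀ => ?_) (fun i₀ => ?_) i
  · have h1 : (fun y => Fin.append (fun i => c * G y i) (fun i => s * H y i)
        (Fin.castAdd a i₀)) = fun y => c * G y i₀ := by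
      funext y; simp [Fin.append_left]
    rw [h1, fderiv_const_mul (hGc i₀), Fin.append_left, pd_apply _ hGc]
    rfl
  · have h1 : (fun y => Fin.append (fun i => c * G y i) (fun i => s * H y i)
        (Fin.natAdd a i₀)) = fun y => s * H y i₀ := by
      funext y; rw [Fin.append_right]
    rw [h1, fderiv_const_mul (hHc i₀), Fin.append_right, pd_apply _ hHc]
    rfl

theorem stmt9 (m n : ℕ) (hm : 1 ≤ m) (hn : 1 ≤ n) (β : ℝ)
    (F₁ F₂ : (Fin (m + 1) → ℝ) → (Fin (n + 1) → ℝ))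
    (hpoly₁ : ∀ i, ∃ P : MvPolynomial (Fin (m + 1)) ℝ,
      P.IsHomogeneous 2 ∧ ∀ x, F₁ x i = MvPolynomial.eval x P)
    (hpoly₂ : ∀ i, ∃ P : MvPolynomial (Fin (m + 1)) ℝ,
      P.IsHomogeneous 2 ∧ ∀ x, F₂ x i = MvPolynomial.eval x P)
    (hsph₁ : ∀ x, ∑ i, (F₁ x i) ^ 2 = (∑ j, (x j) ^ 2) ^ 2)
    (hsph₂ : ∀ x, ∑ i, (F₂ x i) ^ 2 = (∑ j, (x j) ^ 2) ^ 2)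
    (hfrob₁ : ∀ x, frobSq F₁ x = ((m : ℝ) + 5) * ∑ j, (x j) ^ 2)
    (hfrob₂ : ∀ x, frobSq F₂ x = ((m : ℝ) + 5) * ∑ j, (x j) ^ 2)
    (hlap₁ : ∀ x, ∑ i, (lap F₁ x i) ^ 2 = 2 * ((m : ℝ) + 1) ^ 2)
    (hlap₂ : ∀ x, ∑ i, (lap F₂ x i) ^ 2 = 2 * ((m : ℝ) + 1) ^ 2)
    (F : (Fin (m + 1) → ℝ) → (Fin (n + 1 + (n + 1)) → ℝ))
    (hF : ∀ x, F x =
      Fin.append (fun i => Real.cos β * F₁ x i) (fun i => Real.sin β * F₂ x i)) :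
    (∀ x, ∑ i, (F x i) ^ 2 = (∑ j, (x j) ^ 2) ^ 2) ∧
    (∀ x, frobSq F x = ((m : ℝ) + 5) * ∑ j, (x j) ^ 2) ∧
    (∀ x, ∑ i, (lap F x i) ^ 2 = 2 * ((m : ℝ) + 1) ^ 2) := by
  set c := Real.cos β with hc
  set s := Real.sin β with hs
  have htrig : s ^ 2 + c ^ 2 = 1 := Real.sin_sq_add_cos_sq β
  have hF' : F = fun y => Fin.append (fun i => c * F₁ y i) (fun i => s * F₂ y i) :=
    funext hF
  subst hF'
  have hc1 : ContDiff ℝ ⊤ F₁ :=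
    contDiff_of_poly _ (fun i => (hpoly₁ i).imp fun P h => h.2)
  have hc2 : ContDiff ℝ ⊤ F₂ :=
    contDiff_of_poly _ (fun i => (hpoly₂ i).imp fun P h => h.2)
  have hd1 : Differentiable ℝ F₁ := hc1.differentiable (by simp)
  have hd2 : Differentiable ℝ F₂ := hc2.differentiable (by simp)
  have key1 : ∀ (j : Fin (m+1)) (x : Fin (m+1) → ℝ),
      pd (fun y => Fin.append (fun i => c * F₁ y i) (fun i => s * F₂ y i)) j x
        = Fin.append (fun i => c * pd F₁ j x i) (fun i => s * pd F₂ j x i) :=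
    fun j x => pd_append c s F₁ F₂ hd1 hd2 j x
  have key2 : ∀ (j : Fin (m+1)) (x : Fin (m+1) → ℝ),
      pd (pd (fun y => Fin.append (fun i => c * F₁ y i) (fun i => s * F₂ y i)) j) j x
        = Fin.append (fun i => c * pd (pd F₁ j) j x i)
            (fun i => s * pd (pd F₂ j) j x i) := by
    intro j x
    have h1 : pd (fun y => Fin.append (fun i => c * F₁ y i) (fun i => s * F₂ y i)) j
        = fun y => Fin.append (fun i => c * pd F₁ j y i) (fun i => s * pd F₂ j y i) :=
      funext (key1 j)
    rw [h1]
    exact pd_append c s (pd F₁ j) (pd F₂ j)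
      ((contDiff_pd hc1 j).differentiable (by simp))
      ((contDiff_pd hc2 j).differentiable (by simp)) j x
  have lapF : ∀ x, lap (fun y => Fin.append (fun i => c * F₁ y i)
        (fun i => s * F₂ y i)) x
      = Fin.append (fun i => c * lap F₁ x i) (fun i => s * lap F₂ x i) := by
    intro x
    funext i
    show ∑ j, pd (pd _ j) j x i = _
    refine Fin.addCases (fun i₀ => ?_) (fun i₀ => ?_) i
    · simp only [key2, Fin.append_left, lap, ← Finset.mul_sum]
    · simp only [key2, Fin.append_right, lap, ← Finset.mul_sum]
  refine ⟨fun x => ?_, fun x => ?_, fun x => ?_⟩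
  · rw [Fin.sum_univ_add]
    simp only [Fin.append_left, Fin.append_right, mul_pow, ← Finset.mul_sum,
      hsph₁, hsph₂]
    linear_combination (∑ j, x j ^ 2) ^ 2 * htrig
  · rw [frobSq, Fin.sum_univ_add]
    simp only [key1, Fin.append_left, Fin.append_right, mul_pow, ← Finset.mul_sum]
    rw [show (∑ i, ∑ j, (pd F₁ j x i) ^ 2) = frobSq F₁ x from rfl,
      show (∑ i, ∑ j, (pd F₂ j x i) ^ 2) = frobSq F₂ x from rfl, hfrob₁, hfrob₂]
    linear_combination (((m:ℝ) + 5) * ∑ j, x j ^ 2) * htrig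
  · simp only [lapF, ]
    rw [Fin.sum_univ_add]
    simp only [Fin.append_left, Fin.append_right, mul_pow, ← Finset.mul_sum,
      hlap₁, hlap₂]
    linear_combination (2 * ((m:ℝ) + 1) ^ 2) * htrig
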